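/- arXiv:math/0404231 — 2 statements merged into one kernel-verified Lean document; each statement's English description precedes it below -/
import Mathlib

section
/- For any two probability measures λ and μ on a measurable space X and any Markov transition kernel π, the total variation distance satisfies ‖(λ − μ)π‖_Var ≤ δ(π)·‖λ − μ‖_Var, where (μπ)(A) = ∫ π(x,A) μ(dx). -/
open MeasureTheory ProbabilityTheory

noncomputable def contractionCoeff {S : Type*} [MeasurableSpace S]
    (π : ProbabilityTheory.Kernel S S) : ℝ :=
  sSup {r : ℝ | ∃ x₁ x₂ : S, ∃ A : Set S, MeasurableSet A ∧
    r = |(π x₁ A).toReal - (π x₂ A).toReal|}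

/-- Total variation distance between two (probability) measures,
`‖λ − μ‖_Var = sup_A |λ(A) − μ(A)|`. -/
noncomputable def tvDist {S : Type*} [MeasurableSpace S] (lam mu : Measure S) : ℝ :=
  sSup {r : ℝ | ∃ A : Set S, MeasurableSet A ∧ r = |(lam A).toReal - (mu A).toReal|}

open Set

section Aux
variable {S : Type*} [MeasurableSpace S]

lemma toReal_prob_le_one (ν : Measure S) [IsProbabilityMeasure ν] (A : Set S) :
    (ν A).toReal ≤ 1 := by
  have h := prob_le_one (μ := ν) (s := A)
  have := ENNReal.toReal_mono (by simp) h
  simpa using this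

lemma bddAbove_tvSet (lam mu : Measure S) [IsProbabilityMeasure lam] [IsProbabilityMeasure mu] :
    BddAbove {r : ℝ | ∃ A : Set S, MeasurableSet A ∧ r = |(lam A).toReal - (mu A).toReal|} := by
  refine ⟨1, fun r hr => ?_⟩
  obtain ⟨A, hA, rfl⟩ := hr
  have h1 := toReal_prob_le_one lam A
  have h2 := toReal_prob_le_one mu A
  have h3 : (0:ℝ) ≤ (lam A).toReal := ENNReal.toReal_nonneg
  have h4 : (0:ℝ) ≤ (mu A).toReal := ENNReal.toReal_nonneg
  rw [abs_sub_le_iff]; constructor <;> linarith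

lemma bddAbove_deltaSet (π : Kernel S S) [IsMarkovKernel π] :
    BddAbove {r : ℝ | ∃ x₁ x₂ : S, ∃ A : Set S, MeasurableSet A ∧
      r = |(π x₁ A).toReal - (π x₂ A).toReal|} := by
  refine ⟨1, fun r hr => ?_⟩
  obtain ⟨x₁, x₂, A, hA, rfl⟩ := hr
  have h1 := toReal_prob_le_one (π x₁) A
  have h2 := toReal_prob_le_one (π x₂) A
  have h3 : (0:ℝ) ≤ (π x₁ A).toReal := ENNReal.toReal_nonneg
  have h4 : (0:ℝ) ≤ (π x₂ A).toReal := ENNReal.toReal_nonneg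
  rw [abs_sub_le_iff]; constructor <;> linarith

end Aux


section Main
variable {S : Type*} [MeasurableSpace S]

lemma tvDist_comm (lam mu : Measure S) : tvDist lam mu = tvDist mu lam := by
  unfold tvDist
  congr 1
  ext r
  constructor <;> rintro ⟨A, hA, rfl⟩ <;> exact ⟨A, hA, (abs_sub_comm _ _)⟩

lemma tvDist_nonneg (lam mu : Measure S) [IsProbabilityMeasure lam] [IsProbabilityMeasure mu] :
    0 ≤ tvDist lam mu := by
  have h0 : (0:ℝ) ∈ {r : ℝ | ∃ A : Set S, MeasurableSet A ∧
      r = |(lam A).toReal - (mu A).toReal|} :=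
    ⟨∅, MeasurableSet.empty, by simp⟩
  exact le_csSup (bddAbove_tvSet lam mu) h0

lemma contractionCoeff_nonneg [Nonempty S] (π : Kernel S S) [IsMarkovKernel π] :
    0 ≤ contractionCoeff π := by
  obtain ⟨x⟩ := ‹Nonempty S›
  exact le_csSup (bddAbove_deltaSet π) ⟨x, x, ∅, MeasurableSet.empty, by simp⟩

lemma one_side (lam mu : Measure S) [IsProbabilityMeasure lam] [IsProbabilityMeasure mu]
    (π : Kernel S S) [IsMarkovKernel π] {A : Set S} (hA : MeasurableSet A) :
    ((lam.bind (fun x => π x)) A).toReal - ((mu.bind (fun x => π x)) A).toReal ≤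
      contractionCoeff π * tvDist lam mu := by
  have hS : Nonempty S := by
    by_contra h
    rw [not_nonempty_iff] at h
    have h1 : lam Set.univ = 1 := measure_univ
    rw [Set.univ_eq_empty_iff.mpr h] at h1
    simp at h1
  have hδ0 : 0 ≤ contractionCoeff π := contractionCoeff_nonneg π
  have hD0 : 0 ≤ tvDist lam mu := tvDist_nonneg lam mu
  obtain ⟨P, hP, h1, h2⟩ := hahn_decomposition (μ := lam) (ν := mu)
  have hle1 : mu.restrict P ≤ lam.restrict P := by
    rw [Measure.le_iff]
    intro t ht
    rw [Measure.restrict_apply ht, Measure.restrict_apply ht]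
    exact h1 _ (ht.inter hP) Set.inter_subset_right
  have hle2 : lam.restrict Pᶜ ≤ mu.restrict Pᶜ := by
    rw [Measure.le_iff]
    intro t ht
    rw [Measure.restrict_apply ht, Measure.restrict_apply ht]
    exact h2 _ (ht.inter hP.compl) Set.inter_subset_right
  set νp := lam.restrict P - mu.restrict P with hνp
  set νm := mu.restrict Pᶜ - lam.restrict Pᶜ with hνm
  set f : S → ENNReal := fun x => π x A with hf
  have hfm : Measurable f := π.measurable_coe hA
  -- key identity
  have hsplitl : ∫⁻ x, f x ∂lam = ∫⁻ x, f x ∂νp + ∫⁻ x, f x ∂(mu.restrict P)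
      + ∫⁻ x, f x ∂(lam.restrict Pᶜ) := by
    have e1 : lam = νp + mu.restrict P + lam.restrict Pᶜ := by
      rw [hνp, Measure.sub_add_cancel_of_le hle1, Measure.restrict_add_restrict_compl hP]
    conv_lhs => rw [e1]
    rw [lintegral_add_measure, lintegral_add_measure]
  have hsplitm : ∫⁻ x, f x ∂mu = ∫⁻ x, f x ∂(mu.restrict P) + (∫⁻ x, f x ∂νm
      + ∫⁻ x, f x ∂(lam.restrict Pᶜ)) := by
    have e2 : mu = mu.restrict P + (νm + lam.restrict Pᶜ) := by
      rw [hνm, Measure.sub_add_cancel_of_le hle2, Measure.restrict_add_restrict_compl hP]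
    conv_lhs => rw [e2]
    rw [lintegral_add_measure, lintegral_add_measure]
  have hbindl : (lam.bind (fun x => π x)) A = ∫⁻ x, f x ∂lam :=
    Measure.bind_apply hA π.measurable.aemeasurable
  have hbindm : (mu.bind (fun x => π x)) A = ∫⁻ x, f x ∂mu :=
    Measure.bind_apply hA π.measurable.aemeasurable
  -- finiteness bounds
  have hb : ∀ (ν : Measure S), ∫⁻ x, f x ∂ν ≤ ν Set.univ := by
    intro ν
    calc ∫⁻ x, f x ∂ν ≤ ∫⁻ _, 1 ∂ν := lintegral_mono fun x => prob_le_one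
    _ = ν Set.univ := by simp
  have hnt : ∀ (ν : Measure S) [IsFiniteMeasure ν], ∫⁻ x, f x ∂ν ≠ ⊤ := by
    intro ν _
    exact ((hb ν).trans_lt (measure_lt_top ν _)).ne
  set Ip := (∫⁻ x, f x ∂νp).toReal with hIp
  set Im := (∫⁻ x, f x ∂νm).toReal with hIm
  have hkey : ((lam.bind (fun x => π x)) A).toReal - ((mu.bind (fun x => π x)) A).toReal
      = Ip - Im := by
    rw [hbindl, hbindm, hsplitl, hsplitm]
    rw [ENNReal.toReal_add (ENNReal.add_ne_top.mpr ⟨hnt _, hnt _⟩) (hnt _),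
      ENNReal.toReal_add (hnt _) (hnt _),
      ENNReal.toReal_add (hnt _) (ENNReal.add_ne_top.mpr ⟨hnt _, hnt _⟩),
      ENNReal.toReal_add (hnt _) (hnt _)]
    ring
  rw [hkey]
  set K := (νp Set.univ).toReal with hK
  have hmuleP : mu P ≤ lam P := h1 P hP subset_rfl
  have hνpuniv : νp Set.univ = lam P - mu P := by
    rw [hνp, Measure.sub_apply MeasurableSet.univ hle1, Measure.restrict_apply_univ,
      Measure.restrict_apply_univ]
  have hKeq : K = (lam P).toReal - (mu P).toReal := by
    rw [hK, hνpuniv, ENNReal.toReal_sub_of_le hmuleP (measure_ne_top _ _)]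
  have hlamleC : lam Pᶜ ≤ mu Pᶜ := h2 Pᶜ hP.compl subset_rfl
  have hνmuniv : νm Set.univ = mu Pᶜ - lam Pᶜ := by
    rw [hνm, Measure.sub_apply MeasurableSet.univ hle2, Measure.restrict_apply_univ,
      Measure.restrict_apply_univ]
  have hKm : (νm Set.univ).toReal = K := by
    rw [hνmuniv, ENNReal.toReal_sub_of_le hlamleC (measure_ne_top _ _), hKeq]
    have hl : (lam P).toReal + (lam Pᶜ).toReal = 1 := by
      rw [← ENNReal.toReal_add (measure_ne_top _ _) (measure_ne_top _ _),
        measure_add_measure_compl hP, measure_univ, ENNReal.toReal_one]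
    have hm : (mu P).toReal + (mu Pᶜ).toReal = 1 := by
      rw [← ENNReal.toReal_add (measure_ne_top _ _) (measure_ne_top _ _),
        measure_add_measure_compl hP, measure_univ, ENNReal.toReal_one]
    linarith
  have hK0 : 0 ≤ K := ENNReal.toReal_nonneg
  have hKD : K ≤ tvDist lam mu := by
    rw [hKeq]
    exact (le_abs_self _).trans (le_csSup (bddAbove_tvSet lam mu) ⟨P, hP, rfl⟩)
  have hIpK : Ip ≤ K := by
    rw [hIp, hK]
    exact ENNReal.toReal_mono (measure_ne_top _ _) (hb νp)
  have hIm0 : 0 ≤ Im := ENNReal.toReal_nonneg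
  rcases eq_or_ne K 0 with hKz | hKz
  · nlinarith [mul_nonneg hδ0 hD0]
  -- now K ≠ 0, so both P and Pᶜ are nonempty
  have hPne : P.Nonempty := by
    rw [Set.nonempty_iff_ne_empty]
    rintro rfl
    apply hKz
    rw [hKeq]
    simp
  have hPcne : Pᶜ.Nonempty := by
    rw [Set.nonempty_iff_ne_empty]
    intro hcz
    apply hKz
    have hPu : P = Set.univ := by rwa [Set.compl_empty_iff] at hcz
    rw [hKeq, hPu]
    simp
  set g : S → ℝ := fun x => (π x A).toReal with hg
  have hgle1 : ∀ x, g x ≤ 1 := fun x => toReal_prob_le_one (π x) A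
  have hg0 : ∀ x, 0 ≤ g x := fun x => ENNReal.toReal_nonneg
  set s₁ := sSup (g '' P) with hs₁def
  set s₂ := sInf (g '' Pᶜ) with hs₂def
  have hbb1 : BddAbove (g '' P) := ⟨1, by rintro r ⟨x, hx, rfl⟩; exact hgle1 x⟩
  have hbb2 : BddBelow (g '' Pᶜ) := ⟨0, by rintro r ⟨x, hx, rfl⟩; exact hg0 x⟩
  have hs₁0 : 0 ≤ s₁ := by
    obtain ⟨x, hx⟩ := hPne
    exact (hg0 x).trans (le_csSup hbb1 ⟨x, hx, rfl⟩)
  have hs₂0 : 0 ≤ s₂ := le_csInf (hPcne.image g) (by rintro r ⟨x, hx, rfl⟩; exact hg0 x)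
  have hνpc : νp Pᶜ = 0 := by
    rw [hνp, Measure.sub_apply hP.compl hle1, Measure.restrict_apply hP.compl,
      Measure.restrict_apply hP.compl]
    simp [Set.compl_inter_self]
  have hνmc : νm P = 0 := by
    rw [hνm, Measure.sub_apply hP hle2, Measure.restrict_apply hP, Measure.restrict_apply hP]
    simp [Set.inter_compl_self]
  have hIple : Ip ≤ s₁ * K := by
    have hmono : ∫⁻ x, f x ∂νp ≤ ENNReal.ofReal s₁ * νp Set.univ := by
      have hae : ∀ᵐ x ∂νp, f x ≤ ENNReal.ofReal s₁ := by
        rw [ae_iff]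
        refine measure_mono_null ?_ hνpc
        intro x hx
        simp only [Set.mem_setOf_eq, not_le] at hx
        simp only [Set.mem_compl_iff]
        intro hxP
        have hgs : g x ≤ s₁ := le_csSup hbb1 ⟨x, hxP, rfl⟩
        have hfx : f x ≤ ENNReal.ofReal s₁ := by
          calc f x = ENNReal.ofReal (g x) := (ENNReal.ofReal_toReal (measure_ne_top _ _)).symm
          _ ≤ ENNReal.ofReal s₁ := ENNReal.ofReal_le_ofReal hgs
        exact absurd hfx (not_le.mpr hx)
      calc ∫⁻ x, f x ∂νp ≤ ∫⁻ _, ENNReal.ofReal s₁ ∂νp := lintegral_mono_ae hae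
      _ = ENNReal.ofReal s₁ * νp Set.univ := lintegral_const _
    rw [hIp, hK]
    calc (∫⁻ x, f x ∂νp).toReal ≤ (ENNReal.ofReal s₁ * νp Set.univ).toReal :=
      ENNReal.toReal_mono (ENNReal.mul_ne_top ENNReal.ofReal_ne_top (measure_ne_top _ _)) hmono
    _ = s₁ * (νp Set.univ).toReal := by rw [ENNReal.toReal_mul, ENNReal.toReal_ofReal hs₁0]
  have hImge : s₂ * K ≤ Im := by
    have hmono : ENNReal.ofReal s₂ * νm Set.univ ≤ ∫⁻ x, f x ∂νm := by
      have hae : ∀ᵐ x ∂νm, ENNReal.ofReal s₂ ≤ f x := by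
        rw [ae_iff]
        refine measure_mono_null ?_ hνmc
        intro x hx
        simp only [Set.mem_setOf_eq, not_le] at hx
        by_contra hxP
        have hxPc : x ∈ Pᶜ := hxP
        have hgs : s₂ ≤ g x := csInf_le hbb2 ⟨x, hxPc, rfl⟩
        have hfx : ENNReal.ofReal s₂ ≤ f x := by
          calc ENNReal.ofReal s₂ ≤ ENNReal.ofReal (g x) := ENNReal.ofReal_le_ofReal hgs
          _ = f x := ENNReal.ofReal_toReal (measure_ne_top _ _)
        exact absurd hfx (not_le.mpr hx)
      calc ENNReal.ofReal s₂ * νm Set.univ = ∫⁻ _, ENNReal.ofReal s₂ ∂νm :=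
        (lintegral_const _).symm
      _ ≤ ∫⁻ x, f x ∂νm := lintegral_mono_ae hae
    rw [hIm]
    calc s₂ * K = (ENNReal.ofReal s₂ * νm Set.univ).toReal := by
          rw [ENNReal.toReal_mul, ENNReal.toReal_ofReal hs₂0, hKm]
    _ ≤ (∫⁻ x, f x ∂νm).toReal := ENNReal.toReal_mono (hnt νm) hmono
  have hδs : s₁ - s₂ ≤ contractionCoeff π := by
    rw [sub_le_iff_le_add]
    apply csSup_le (hPne.image g)
    rintro r ⟨x₁, hx₁, rfl⟩
    rw [← sub_le_iff_le_add']
    apply le_csInf (hPcne.image g)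
    rintro r ⟨x₂, hx₂, rfl⟩
    have habs : |g x₁ - g x₂| ≤ contractionCoeff π :=
      le_csSup (bddAbove_deltaSet π) ⟨x₁, x₂, A, hA, rfl⟩
    have h := (le_abs_self (g x₁ - g x₂)).trans habs
    linarith
  calc Ip - Im ≤ s₁ * K - s₂ * K := by linarith
  _ = (s₁ - s₂) * K := by ring
  _ ≤ contractionCoeff π * K := mul_le_mul_of_nonneg_right hδs hK0
  _ ≤ contractionCoeff π * tvDist lam mu := mul_le_mul_of_nonneg_left hKD hδ0

end Main

/-- `‖(λ − μ)π‖_Var ≤ δ(π)·‖λ − μ‖_Var`, where `(μπ)(A) = ∫ π(x,A) μ(dx)`. -/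
theorem tvDist_bind_le {S : Type*} [MeasurableSpace S]
    (lam mu : Measure S) [IsProbabilityMeasure lam] [IsProbabilityMeasure mu]
    (π : ProbabilityTheory.Kernel S S) [IsMarkovKernel π] :
    tvDist (lam.bind (fun x => π x)) (mu.bind (fun x => π x)) ≤
      contractionCoeff π * tvDist lam mu := by
  have hS : Nonempty S := by
    by_contra h
    rw [not_nonempty_iff] at h
    have h1 : lam Set.univ = 1 := measure_univ
    rw [Set.univ_eq_empty_iff.mpr h] at h1
    simp at h1
  apply Real.sSup_le
  · rintro r ⟨A, hA, rfl⟩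
    rw [abs_sub_le_iff]
    refine ⟨one_side lam mu π hA, ?_⟩
    have h := one_side mu lam π hA
    rwa [tvDist_comm mu lam] at h
  · exact mul_nonneg (contractionCoeff_nonneg π) (tvDist_nonneg lam mu)
end

section
/- Under the assumptions of the previous statement (non-homogeneous Markov chain with all δ(π_{i,i+1}) ≤ 1 − α, functions f_i bounded by C with mean zero), the functions Z_k = Σ_{i=k}^n E[f_i(X_i) | X_k] satisfy ‖Z_k‖_∞ ≤ 2C/α for every 1 ≤ k ≤ n. -/
open MeasureTheory ProbabilityTheory

section Aux

variable {S : Type*} [MeasurableSpace S]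

lemma toReal_le_one (π : Kernel S S) [IsMarkovKernel π] (x : S) (A : Set S) :
    (π x A).toReal ≤ 1 := by
  have h1 : π x A ≤ 1 := by
    rw [← (measure_univ : π x Set.univ = 1)]
    exact measure_mono (Set.subset_univ A)
  calc (π x A).toReal ≤ (1 : ENNReal).toReal := ENNReal.toReal_mono (by simp) h1
    _ = 1 := by simp

lemma abs_le_contractionCoeff (π : Kernel S S) [IsMarkovKernel π]
    {x₁ x₂ : S} {A : Set S} (hA : MeasurableSet A) :
    |(π x₁ A).toReal - (π x₂ A).toReal| ≤ contractionCoeff π := by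
  apply le_csSup
  · refine ⟨1, ?_⟩
    rintro r ⟨y₁, y₂, B, hB, rfl⟩
    have h1 := toReal_le_one π y₁ B
    have h2 := toReal_le_one π y₂ B
    have h3 : (0:ℝ) ≤ (π y₁ B).toReal := ENNReal.toReal_nonneg
    have h4 : (0:ℝ) ≤ (π y₂ B).toReal := ENNReal.toReal_nonneg
    rw [abs_sub_le_iff]; constructor <;> linarith
  · exact ⟨x₁, x₂, A, hA, rfl⟩

lemma integrable_of_bound {α : Type*} [MeasurableSpace α] (μ : Measure α) [IsFiniteMeasure μ]
    {g : α → ℝ} (hg : AEStronglyMeasurable g μ) (M : ℝ) (hb : ∀ x, |g x| ≤ M) :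
    Integrable g μ :=
  (integrable_const M).mono' hg (Filter.Eventually.of_forall fun x => by
    simpa [Real.norm_eq_abs] using hb x)

lemma integral_kernel_sub_le (π : Kernel S S) [IsMarkovKernel π] {d : ℝ}
    (hd : contractionCoeff π ≤ d)
    {g : S → ℝ} (hg : Measurable g) {D : ℝ} (hD : 0 ≤ D)
    (hosc : ∀ x y, g x - g y ≤ D) (x₁ x₂ : S) :
    ∫ y, g y ∂π x₁ - ∫ y, g y ∂π x₂ ≤ D * d := by
  haveI : Nonempty S := ⟨x₁⟩
  set a : ℝ := ⨅ x, g x with ha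
  have hbdd : BddBelow (Set.range g) := ⟨g x₁ - D, by
    rintro r ⟨y, rfl⟩; linarith [hosc x₁ y]⟩
  have hga : ∀ x, a ≤ g x := fun x => ciInf_le hbdd x
  have hgaD : ∀ x, g x - a ≤ D := fun x => by
    have : g x - D ≤ a := le_ciInf fun y => by linarith [hosc x y]
    linarith
  set g' : S → ℝ := fun x => g x - a with hg'
  have hg'm : Measurable g' := hg.sub measurable_const
  have hg'nn : ∀ x, 0 ≤ g' x := fun x => by simp [hg']; linarith [hga x]
  have hg'D : ∀ x, g' x ≤ D := fun x => hgaD x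
  have hg'abs : ∀ x, |g' x| ≤ D := fun x => by
    rw [abs_le]; constructor
    · linarith [hg'nn x]
    · exact hg'D x
  -- integrals of g' vs g
  have hint : ∀ x : S, Integrable g' (π x) :=
    fun x => integrable_of_bound _ hg'm.aestronglyMeasurable D hg'abs
  have hintg : ∀ x : S, Integrable g (π x) := fun x => by
    have h := (hint x).add (integrable_const a)
    have hgeq : (fun x => g' x + a) = g := by funext x; simp [hg']
    exact hgeq ▸ h
  have key : ∫ y, g' y ∂π x₁ - ∫ y, g' y ∂π x₂ ≤ D * d → _root_.True := fun _ => trivial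
  have hred : ∀ x : S, ∫ y, g y ∂π x = ∫ y, g' y ∂π x + a := by
    intro x
    rw [hg']
    rw [integral_sub (hintg x) (integrable_const a), integral_const]
    simp
  rw [hred x₁, hred x₂]
  have hmain : ∫ y, g' y ∂π x₁ - ∫ y, g' y ∂π x₂ ≤ D * d := by
    obtain ⟨s, hs, h₁, h₂⟩ := hahn_decomposition (μ := π x₁) (ν := π x₂)
    have hle : (π x₂).restrict s ≤ (π x₁).restrict s := by
      rw [Measure.le_iff]
      intro t ht
      rw [Measure.restrict_apply ht, Measure.restrict_apply ht]
      exact h₁ _ (ht.inter hs) Set.inter_subset_right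
    have hle' : (π x₁).restrict sᶜ ≤ (π x₂).restrict sᶜ := by
      rw [Measure.le_iff]
      intro t ht
      rw [Measure.restrict_apply ht, Measure.restrict_apply ht]
      exact h₂ _ (ht.inter hs.compl) Set.inter_subset_right
    set ρ : Measure S := (π x₁).restrict s - (π x₂).restrict s with hρ
    haveI : IsFiniteMeasure ρ := isFiniteMeasure_of_le _ Measure.sub_le
    have hcancel : ρ + (π x₂).restrict s = (π x₁).restrict s :=
      Measure.sub_add_cancel_of_le hle
    have hsplit1 : ∫ y, g' y ∂(π x₁) = ∫ y in s, g' y ∂(π x₁) + ∫ y in sᶜ, g' y ∂(π x₁) :=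
      (integral_add_compl hs (hint x₁)).symm
    have hsplit2 : ∫ y, g' y ∂(π x₂) = ∫ y in s, g' y ∂(π x₂) + ∫ y in sᶜ, g' y ∂(π x₂) :=
      (integral_add_compl hs (hint x₂)).symm
    have hrestint : ∀ (μ : Measure S) [IsFiniteMeasure μ], Integrable g' μ :=
      fun μ _ => integrable_of_bound μ hg'm.aestronglyMeasurable D hg'abs
    have hsplitρ : ∫ y in s, g' y ∂(π x₁) = ∫ y, g' y ∂ρ + ∫ y in s, g' y ∂(π x₂) := by
      rw [← hcancel, integral_add_measure (hrestint ρ) (hrestint _)]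
    have hρle : ∫ y, g' y ∂ρ ≤ D * d := by
      have h1 : ∫ y, g' y ∂ρ ≤ ∫ _, D ∂ρ :=
        integral_mono (hrestint ρ) (integrable_const D) hg'D
      rw [integral_const, smul_eq_mul] at h1
      have hρuniv : ρ Set.univ = π x₁ s - π x₂ s := by
        rw [hρ, Measure.sub_apply MeasurableSet.univ hle,
          Measure.restrict_apply_univ, Measure.restrict_apply_univ]
      have hνμ : π x₂ s ≤ π x₁ s := h₁ s hs subset_rfl
      have htr : (ρ Set.univ).toReal = (π x₁ s).toReal - (π x₂ s).toReal := by
        rw [hρuniv, ENNReal.toReal_sub_of_le hνμ (measure_ne_top _ _)]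
      have hcc : (π x₁ s).toReal - (π x₂ s).toReal ≤ d :=
        le_trans (le_abs_self _) (le_trans (abs_le_contractionCoeff π hs) hd)
      calc ∫ y, g' y ∂ρ ≤ (ρ Set.univ).toReal * D := h1
        _ = ((π x₁ s).toReal - (π x₂ s).toReal) * D := by rw [htr]
        _ ≤ d * D := by
            apply mul_le_mul_of_nonneg_right hcc hD
        _ = D * d := mul_comm _ _
    have hcompl : ∫ y in sᶜ, g' y ∂(π x₁) ≤ ∫ y in sᶜ, g' y ∂(π x₂) :=
      integral_mono_measure hle' (Filter.Eventually.of_forall hg'nn) (hrestint _)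
    linarith
  linarith
end Aux

section Iter

variable {S : Type*} [MeasurableSpace S]

lemma abs_integral_kernel_sub_le (π : Kernel S S) [IsMarkovKernel π] {d : ℝ}
    (hd : contractionCoeff π ≤ d)
    {g : S → ℝ} (hg : Measurable g) {D : ℝ} (hD : 0 ≤ D)
    (hosc : ∀ x y, |g x - g y| ≤ D) (x₁ x₂ : S) :
    |∫ y, g y ∂π x₁ - ∫ y, g y ∂π x₂| ≤ D * d := by
  have h1 := integral_kernel_sub_le π hd hg hD
    (fun x y => le_trans (le_abs_self _) (hosc x y)) x₁ x₂
  have h2 := integral_kernel_sub_le π hd hg hD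
    (fun x y => le_trans (le_abs_self _) (hosc x y)) x₂ x₁
  rw [abs_sub_le_iff]; exact ⟨h1, h2⟩

/-- iterated kernel action: `iterOp π k i g = π_{k,i} g` for `k ≤ i`. -/
noncomputable def iterOp (π : ℕ → Kernel S S) (k : ℕ) : ℕ → (S → ℝ) → (S → ℝ)
  | 0, g => g
  | (i+1), g => if i + 1 ≤ k then g else iterOp π k i (fun x => ∫ y, g y ∂π i x)

lemma iterOp_self (π : ℕ → Kernel S S) (k : ℕ) (g : S → ℝ) : iterOp π k k g = g := by
  cases k with
  | zero => rfl
  | succ j => simp [iterOp]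

lemma iterOp_succ (π : ℕ → Kernel S S) {k i : ℕ} (hki : k ≤ i) (g : S → ℝ) :
    iterOp π k (i+1) g = iterOp π k i (fun x => ∫ y, g y ∂π i x) := by
  rw [iterOp, if_neg (by omega)]

lemma kernelOp_measurable (π : ℕ → Kernel S S) [∀ i, IsMarkovKernel (π i)] (i : ℕ)
    {g : S → ℝ} (hg : Measurable g) :
    Measurable fun x => ∫ y, g y ∂π i x := by
  have : StronglyMeasurable fun p : S × S => g p.2 :=
    (hg.comp measurable_snd).stronglyMeasurable
  exact (this.integral_kernel_prod_right' (κ := π i)).measurable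

lemma kernelOp_bound (π : ℕ → Kernel S S) [∀ i, IsMarkovKernel (π i)] (i : ℕ)
    {g : S → ℝ} {M : ℝ} (hb : ∀ x, |g x| ≤ M) (x : S) :
    |∫ y, g y ∂π i x| ≤ M := by
  have := norm_integral_le_of_norm_le_const (μ := π i x) (f := g) (C := M)
    (Filter.Eventually.of_forall fun y => by simpa [Real.norm_eq_abs] using hb y)
  simpa [Real.norm_eq_abs] using this

lemma iterOp_measurable_bound (π : ℕ → Kernel S S) [∀ i, IsMarkovKernel (π i)]
    {k : ℕ} : ∀ i, k ≤ i → ∀ (g : S → ℝ) (M : ℝ), Measurable g → (∀ x, |g x| ≤ M) →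
    Measurable (iterOp π k i g) ∧ ∀ x, |iterOp π k i g x| ≤ M := by
  refine Nat.le_induction ?_ ?_
  · intro g M hg hb
    rw [iterOp_self]; exact ⟨hg, hb⟩
  · intro i hki IH g M hg hb
    rw [iterOp_succ π hki]
    exact IH _ M (kernelOp_measurable π i hg) (kernelOp_bound π i hb)

lemma iterOp_osc (π : ℕ → Kernel S S) [∀ i, IsMarkovKernel (π i)]
    {α : ℝ} (hα1 : α ≤ 1) (hδ : ∀ i, contractionCoeff (π i) ≤ 1 - α)
    {k : ℕ} : ∀ i, k ≤ i → ∀ (g : S → ℝ) (D : ℝ), Measurable g → 0 ≤ D →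
    (∀ x y, |g x - g y| ≤ D) →
    ∀ x y, |iterOp π k i g x - iterOp π k i g y| ≤ D * (1 - α) ^ (i - k) := by
  refine Nat.le_induction ?_ ?_
  · intro g D hg hD hosc x y
    rw [iterOp_self]
    simpa using hosc x y
  · intro i hki IH g D hg hD hosc x y
    rw [iterOp_succ π hki]
    have h1α : (0:ℝ) ≤ 1 - α := by linarith
    have hosc' : ∀ x y, |(fun x => ∫ z, g z ∂π i x) x - (fun x => ∫ z, g z ∂π i x) y|
        ≤ D * (1 - α) :=
      fun x y => abs_integral_kernel_sub_le (π i) (hδ i) hg hD hosc x y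
    have := IH _ (D * (1 - α)) (kernelOp_measurable π i hg)
      (mul_nonneg hD h1α) hosc' x y
    calc |iterOp π k i (fun x => ∫ z, g z ∂π i x) x -
          iterOp π k i (fun x => ∫ z, g z ∂π i x) y|
        ≤ D * (1 - α) * (1 - α) ^ (i - k) := this
      _ = D * (1 - α) ^ (i + 1 - k) := by
          rw [Nat.succ_sub hki, pow_succ]; ring

end Iter

/-- The σ-field `σ(X_1, …, X_i)` generated by the chain up to time `i`. -/
def pastFiltration {Ω S : Type*} [MeasurableSpace S] (X : ℕ → Ω → S) (i : ℕ) :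
    MeasurableSpace Ω :=
  ⨆ j ∈ Set.Icc 1 i, MeasurableSpace.comap (X j) inferInstance

/-- with the setup of Statement 5, the resolvent-type variables
`Z_k = Σ_{i=k}^n E[f_i(X_i) | X_k]` satisfy `‖Z_k‖_∞ ≤ 2C/α` for `1 ≤ k ≤ n`. -/
theorem abs_Z_le {S Ω : Type*} [MeasurableSpace S] [MeasurableSpace Ω]
    (P : Measure Ω) [IsProbabilityMeasure P]
    (X : ℕ → Ω → S) (hX : ∀ i, Measurable (X i))
    (π : ℕ → ProbabilityTheory.Kernel S S) [∀ i, IsMarkovKernel (π i)]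
    (hMarkov : ∀ i, 1 ≤ i → ∀ g : S → ℝ, Measurable g → (∃ M, ∀ x, |g x| ≤ M) →
      P[(fun ω => g (X (i + 1) ω)) | pastFiltration X i]
        =ᵐ[P] fun ω => ∫ y, g y ∂(π i (X i ω)))
    (α : ℝ) (hα0 : 0 < α) (hα1 : α ≤ 1)
    (hδ : ∀ i, contractionCoeff (π i) ≤ 1 - α)
    (C : ℝ) (n : ℕ) (f : ℕ → S → ℝ) (hfmeas : ∀ j, Measurable (f j))
    (hfC : ∀ j x, |f j x| ≤ C)
    (hmean : ∀ j, ∫ ω, f j (X j ω) ∂P = 0)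
    (k : ℕ) (h1k : 1 ≤ k) (hkn : k ≤ n) :
    ∀ᵐ ω ∂P,
      |∑ i ∈ Finset.Icc k n,
          (P[(fun ω => f i (X i ω)) | MeasurableSpace.comap (X k) inferInstance]) ω|
        ≤ 2 * C / α := by
  haveI : Nonempty Ω := by
    by_contra h
    have h1 : P Set.univ = 1 := measure_univ
    rw [Set.univ_eq_empty_iff.mpr (not_nonempty_iff.mp h)] at h1
    simp at h1
  have hC0 : 0 ≤ C := le_trans (abs_nonneg _) (hfC 0 (X 0 (Classical.arbitrary Ω)))
  have h1α : (0:ℝ) ≤ 1 - α := by linarith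
  -- σ-algebra facts
  have hpast_le : ∀ i, pastFiltration X i ≤ ‹MeasurableSpace Ω› := by
    intro i
    refine iSup₂_le fun j _ => ?_
    exact (measurable_iff_comap_le.mp (hX j))
  have hcomap_le_past : ∀ {i : ℕ}, 1 ≤ i →
      MeasurableSpace.comap (X i) inferInstance ≤ pastFiltration X i := by
    intro i hi
    rw [pastFiltration]
    exact le_biSup (fun j => MeasurableSpace.comap (X j) inferInstance)
      (Set.mem_Icc.mpr ⟨hi, le_rfl⟩)
  have hpast_mono : ∀ {i j : ℕ}, i ≤ j → pastFiltration X i ≤ pastFiltration X j := by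
    intro i j hij
    rw [pastFiltration, pastFiltration]
    exact biSup_mono (Set.Icc_subset_Icc_right hij)
  have hcomap_le : MeasurableSpace.comap (X k) inferInstance ≤ ‹MeasurableSpace Ω› :=
    measurable_iff_comap_le.mp (hX k)
  have hXk_comap : Measurable[MeasurableSpace.comap (X k) inferInstance] (X k) :=
    Measurable.of_comap_le le_rfl
  -- integrability helper
  have hintP : ∀ (i : ℕ) (g : S → ℝ), Measurable g → (∀ x, |g x| ≤ C ∨ True) → True := fun _ _ _ _ => trivial
  -- key conditional expectation computation over the past filtration
  have key : ∀ i, k ≤ i → ∀ (g : S → ℝ) (M : ℝ), Measurable g → (∀ x, |g x| ≤ M) →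
      P[(fun ω => g (X i ω)) | pastFiltration X k]
        =ᵐ[P] fun ω => iterOp π k i g (X k ω) := by
    refine Nat.le_induction ?_ ?_
    · intro g M hg hb
      rw [iterOp_self]
      have hsm : StronglyMeasurable[pastFiltration X k] (fun ω => g (X k ω)) :=
        ((hg.comp hXk_comap).mono (hcomap_le_past h1k) le_rfl).stronglyMeasurable
      rw [condExp_of_stronglyMeasurable (hpast_le k) hsm
        (integrable_of_bound P ((hg.comp (hX k)).aestronglyMeasurable) M fun ω => hb _)]
    · intro i hki IH g M hg hb
      have h1i : 1 ≤ i := le_trans h1k hki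
      have step1 :
          P[(fun ω => g (X (i+1) ω)) | pastFiltration X k]
            =ᵐ[P] P[P[(fun ω => g (X (i+1) ω)) | pastFiltration X i] | pastFiltration X k] :=
        (condExp_condExp_of_le (hpast_mono hki) (hpast_le i)).symm
      have step2 :
          P[P[(fun ω => g (X (i+1) ω)) | pastFiltration X i] | pastFiltration X k]
            =ᵐ[P] P[(fun ω => ∫ y, g y ∂π i (X i ω)) | pastFiltration X k] :=
        condExp_congr_ae (hMarkov i h1i g hg ⟨M, hb⟩)
      have step3 :
          P[(fun ω => ∫ y, g y ∂π i (X i ω)) | pastFiltration X k]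
            =ᵐ[P] fun ω => iterOp π k i (fun x => ∫ y, g y ∂π i x) (X k ω) :=
        IH _ M (kernelOp_measurable π i hg) (kernelOp_bound π i hb)
      rw [iterOp_succ π hki]
      exact (step1.trans step2).trans step3
  -- conditional expectation w.r.t. σ(X_k)
  have key2 : ∀ i, k ≤ i →
      P[(fun ω => f i (X i ω)) | MeasurableSpace.comap (X k) inferInstance]
        =ᵐ[P] fun ω => iterOp π k i (f i) (X k ω) := by
    intro i hki
    obtain ⟨hAmeas, hAb⟩ :=
      iterOp_measurable_bound π i hki (f i) C (hfmeas i) (hfC i)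
    have t1 :
        P[(fun ω => f i (X i ω)) | MeasurableSpace.comap (X k) inferInstance]
          =ᵐ[P] P[P[(fun ω => f i (X i ω)) | pastFiltration X k] |
            MeasurableSpace.comap (X k) inferInstance] :=
      (condExp_condExp_of_le (hcomap_le_past h1k) (hpast_le k)).symm
    have t2 :
        P[P[(fun ω => f i (X i ω)) | pastFiltration X k] |
            MeasurableSpace.comap (X k) inferInstance]
          =ᵐ[P] P[(fun ω => iterOp π k i (f i) (X k ω)) |
            MeasurableSpace.comap (X k) inferInstance] :=
      condExp_congr_ae (key i hki (f i) C (hfmeas i) (hfC i))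
    have hsm2 : StronglyMeasurable[MeasurableSpace.comap (X k) inferInstance]
        (fun ω => iterOp π k i (f i) (X k ω)) :=
      (hAmeas.comp hXk_comap).stronglyMeasurable
    have t3 :
        P[(fun ω => iterOp π k i (f i) (X k ω)) |
            MeasurableSpace.comap (X k) inferInstance]
          = fun ω => iterOp π k i (f i) (X k ω) :=
      condExp_of_stronglyMeasurable hcomap_le hsm2
        (integrable_of_bound P ((hAmeas.comp (hX k)).aestronglyMeasurable) C fun ω => hAb _)
    exact (t1.trans t2).trans (Filter.EventuallyEq.of_eq t3)
  -- pointwise bound on iterOp π k i (f i)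
  have hbound : ∀ i, k ≤ i → ∀ x, |iterOp π k i (f i) x| ≤ 2 * C * (1 - α) ^ (i - k) := by
    intro i hki x
    obtain ⟨hAmeas, hAb⟩ :=
      iterOp_measurable_bound π i hki (f i) C (hfmeas i) (hfC i)
    have hosc : ∀ x y, |iterOp π k i (f i) x - iterOp π k i (f i) y|
        ≤ 2 * C * (1 - α) ^ (i - k) :=
      iterOp_osc π hα1 hδ i hki (f i) (2 * C) (hfmeas i) (by linarith)
        (fun x y => by
          have := abs_sub (f i x) (f i y)
          calc |f i x - f i y| ≤ |f i x| + |f i y| := abs_sub _ _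
            _ ≤ 2 * C := by linarith [hfC i x, hfC i y])
    -- the mean of iterOp π k i (f i) (X k ·) is 0
    have hintA : Integrable (fun ω => iterOp π k i (f i) (X k ω)) P :=
      integrable_of_bound P ((hAmeas.comp (hX k)).aestronglyMeasurable) C fun ω => hAb _
    have hintf : Integrable (fun ω => f i (X i ω)) P :=
      integrable_of_bound P (((hfmeas i).comp (hX i)).aestronglyMeasurable) C fun ω => hfC i _
    have hmean0 : ∫ ω, iterOp π k i (f i) (X k ω) ∂P = 0 := by
      rw [← integral_congr_ae (key2 i hki), integral_condExp hcomap_le, hmean i]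
    have hrepr : iterOp π k i (f i) x = ∫ ω, (iterOp π k i (f i) x - iterOp π k i (f i) (X k ω)) ∂P := by
      rw [integral_sub (integrable_const _) hintA, hmean0, integral_const]
      simp
    rw [hrepr]
    calc |∫ ω, (iterOp π k i (f i) x - iterOp π k i (f i) (X k ω)) ∂P|
        ≤ ∫ ω, |iterOp π k i (f i) x - iterOp π k i (f i) (X k ω)| ∂P := by
          simpa [Real.norm_eq_abs] using
            norm_integral_le_integral_norm
              (fun ω => iterOp π k i (f i) x - iterOp π k i (f i) (X k ω)) (μ := P)
      _ ≤ ∫ _, 2 * C * (1 - α) ^ (i - k) ∂P := by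
          apply integral_mono (((integrable_const _).sub hintA).abs) (integrable_const _)
          intro ω; exact hosc x _
      _ = 2 * C * (1 - α) ^ (i - k) := by simp
  -- combine
  have hae : ∀ᵐ ω ∂P, ∀ i ∈ Finset.Icc k n,
      (P[(fun ω => f i (X i ω)) | MeasurableSpace.comap (X k) inferInstance]) ω
        = iterOp π k i (f i) (X k ω) := by
    rw [Filter.eventually_all_finset]
    intro i hi
    exact key2 i (Finset.mem_Icc.mp hi).1
  filter_upwards [hae] with ω hω
  calc |∑ i ∈ Finset.Icc k n,
        (P[(fun ω => f i (X i ω)) | MeasurableSpace.comap (X k) inferInstance]) ω|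
      = |∑ i ∈ Finset.Icc k n, iterOp π k i (f i) (X k ω)| := by
        rw [Finset.sum_congr rfl hω]
    _ ≤ ∑ i ∈ Finset.Icc k n, |iterOp π k i (f i) (X k ω)| :=
        Finset.abs_sum_le_sum_abs _ _
    _ ≤ ∑ i ∈ Finset.Icc k n, 2 * C * (1 - α) ^ (i - k) :=
        Finset.sum_le_sum fun i hi => hbound i (Finset.mem_Icc.mp hi).1 _
    _ = 2 * C * ∑ i ∈ Finset.Icc k n, (1 - α) ^ (i - k) := by
        rw [Finset.mul_sum]
    _ ≤ 2 * C * (1 / α) := by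
        apply mul_le_mul_of_nonneg_left _ (by linarith)
        have hre : ∑ i ∈ Finset.Icc k n, (1 - α) ^ (i - k)
            = ∑ j ∈ Finset.range (n + 1 - k), (1 - α) ^ j := by
          rw [← Finset.Ico_add_one_right_eq_Icc, Finset.sum_Ico_eq_sum_range]
          exact Finset.sum_congr rfl fun j _ => by
            congr 1
            omega
        rw [hre]
        have hr1 : (1 - α : ℝ) ≠ 1 := by intro h; linarith [hα0]
        rw [geom_sum_eq hr1]
        have hpow : (0:ℝ) ≤ (1 - α) ^ (n + 1 - k) := pow_nonneg h1α _
        have hpow1 : (1 - α : ℝ) ^ (n + 1 - k) ≤ 1 := pow_le_one₀ h1α (by linarith)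
        have : ((1 - α : ℝ) ^ (n + 1 - k) - 1) / (1 - α - 1) = (1 - (1-α) ^ (n+1-k)) / α := by
          rw [show (1 - α - 1 : ℝ) = -α by ring, div_neg, ← neg_div]
          ring_nf
        rw [this]
        rw [div_le_div_iff₀ hα0 hα0]
        nlinarith
    _ = 2 * C / α := by ring
end
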